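/- Let B ∈ M(m, ℂ). A vector v ∈ ℂ^m is a cyclic vector for B if and only if for every matrix B' commuting with B, B'v = 0 implies B' = 0. -/

import Mathlib

open Matrix Polynomial

/-- `v` is cyclic for `B` iff every member `B'` of the commutant of `B` with
`B' v = 0` is zero. -/
theorem cyclic_iff_commutant_faithful {m : ℕ}
    (B : Matrix (Fin m) (Fin m) ℂ) (v : Fin m → ℂ) :
    (∀ w : Fin m → ℂ, ∃ f : Polynomial ℂ, (aeval B f) *ᵥ v = w) ↔
      (∀ B' : Matrix (Fin m) (Fin m) ℂ, B' * B = B * B' → B' *ᵥ v = 0 → B' = 0) := by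
  constructor
  · -- forward: cyclic ⇒ commutant faithful
    intro hcyc B' hcomm hv
    have hc : ∀ p : Polynomial ℂ, B' * aeval B p = aeval B p * B' := by
      intro p
      induction p using Polynomial.induction_on' with
      | add p q hp hq => simp [map_add, mul_add, add_mul, hp, hq]
      | monomial n a =>
        have hpow : B' * B ^ n = B ^ n * B' :=
          ((Commute.pow_right (hcomm : Commute B' B) n))
        rw [aeval_monomial]
        calc B' * (algebraMap ℂ _ a * B ^ n)
            = algebraMap ℂ _ a * (B' * B ^ n) := by
              rw [← mul_assoc, ← Algebra.commutes, mul_assoc]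
          _ = algebraMap ℂ _ a * B ^ n * B' := by rw [hpow, mul_assoc]
    have hall : ∀ w : Fin m → ℂ, B' *ᵥ w = 0 := by
      intro w
      obtain ⟨p, hp⟩ := hcyc w
      calc B' *ᵥ w = B' *ᵥ (aeval B p *ᵥ v) := by rw [hp]
        _ = (B' * aeval B p) *ᵥ v := by rw [mulVec_mulVec]
        _ = (aeval B p * B') *ᵥ v := by rw [hc]
        _ = aeval B p *ᵥ (B' *ᵥ v) := by rw [mulVec_mulVec]
        _ = 0 := by rw [hv, mulVec_zero]
    ext i j
    have := congrFun (hall (Pi.single j 1)) i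
    simpa using this
  · -- backward: commutant faithful ⇒ cyclic
    intro h
    by_contra hnc
    push_neg at hnc
    obtain ⟨w, hw⟩ := hnc
    -- the cyclic subspace W
    let L : Polynomial ℂ →ₗ[ℂ] (Fin m → ℂ) :=
      { toFun := fun p => (aeval B p) *ᵥ v
        map_add' := by intro p q; simp [add_mulVec]
        map_smul' := by intro c p; simp [smul_mulVec] }
    set W : Submodule ℂ (Fin m → ℂ) := LinearMap.range L with hWdef
    have hmemW : ∀ x, x ∈ W ↔ ∃ p : Polynomial ℂ, (aeval B p) *ᵥ v = x := by
      intro x; constructor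
      · rintro ⟨p, rfl⟩; exact ⟨p, rfl⟩
      · rintro ⟨p, rfl⟩; exact ⟨p, rfl⟩
    have hvW : v ∈ W := (hmemW v).2 ⟨1, by simp⟩
    have hwW : w ∉ W := by
      intro hx
      obtain ⟨p, hp⟩ := (hmemW w).1 hx
      exact hw p hp
    have hWinv : ∀ x ∈ W, B *ᵥ x ∈ W := by
      intro x hx
      obtain ⟨p, rfl⟩ := (hmemW x).1 hx
      refine (hmemW _).2 ⟨X * p, ?_⟩
      rw [_root_.map_mul, aeval_X, ← mulVec_mulVec]
    -- a nonzero functional vanishing on W, realized as a vector u₀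
    obtain ⟨f, hfw, hfW⟩ := W.exists_dual_map_eq_bot_of_notMem hwW inferInstance
    have hfzero : ∀ x ∈ W, f x = 0 := by
      intro x hx
      have : f x ∈ W.map f := Submodule.mem_map_of_mem hx
      rwa [hfW, Submodule.mem_bot] at this
    set u₀ : Fin m → ℂ := fun j => f (Pi.single j 1) with hu₀def
    have hfdot : ∀ x : Fin m → ℂ, f x = u₀ ⬝ᵥ x := by
      intro x
      have hx : x = ∑ j, x j • (Pi.single j 1 : Fin m → ℂ) := by
        conv_lhs => rw [← Finset.univ_sum_single x]
        refine Finset.sum_congr rfl fun j _ => ?_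
        rw [← Pi.single_smul, smul_eq_mul, mul_one]
      conv_lhs => rw [hx]
      rw [map_sum]
      simp [dotProduct, hu₀def, mul_comm]
    -- the annihilator of W
    let ann : Submodule ℂ (Fin m → ℂ) :=
      { carrier := {u | ∀ x ∈ W, u ⬝ᵥ x = 0}
        add_mem' := fun ha hb x hx => by
          simp [add_dotProduct, ha x hx, hb x hx]
        zero_mem' := fun x hx => zero_dotProduct x
        smul_mem' := fun c u hu x hx => by
          simp [smul_dotProduct, hu x hx] }
    have hannmem : ∀ u, u ∈ ann ↔ ∀ x ∈ W, u ⬝ᵥ x = 0 := fun u => Iff.rfl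
    have hu₀ann : u₀ ∈ ann := by
      intro x hx
      rw [← hfdot]; exact hfzero x hx
    have hu₀ne : u₀ ≠ 0 := by
      intro hz
      apply hfw
      rw [hfdot, hz, zero_dotProduct]
    -- ann is invariant under Bᵀ
    have hanninv : ∀ u ∈ ann, (Matrix.mulVecLin Bᵀ) u ∈ ann := by
      intro u hu x hx
      rw [mulVecLin_apply, mulVec_transpose, ← dotProduct_mulVec]
      exact hu _ (hWinv x hx)
    -- eigenvector of Bᵀ inside ann
    have : Nontrivial ann := by
      refine ⟨⟨u₀, hu₀ann⟩, 0, ?_⟩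
      simp [Subtype.ext_iff, hu₀ne]
    obtain ⟨lam, hlam⟩ :=
      Module.End.exists_eigenvalue ((Matrix.mulVecLin Bᵀ).restrict hanninv)
    obtain ⟨y, hy⟩ := hlam.exists_hasEigenvector
    set φ : Fin m → ℂ := (y : Fin m → ℂ) with hφdef
    have hφann : φ ∈ ann := y.2
    have hφne : φ ≠ 0 := fun hz => hy.2 (by ext : 1; exact hz)
    have hBφ : Bᵀ *ᵥ φ = lam • φ := by
      rw [mulVec_transpose]
      have := congrArg Subtype.val hy.apply_eq_smul
      simpa [LinearMap.restrict_apply, mulVecLin_apply, mulVec_transpose] using this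
    -- eigenvector of B for the same eigenvalue
    have hdet : (B - lam • 1).det = 0 := by
      have hdetT : (Bᵀ - lam • 1).det = 0 := by
        rw [← Matrix.exists_mulVec_eq_zero_iff]
        refine ⟨φ, hφne, ?_⟩
        rw [sub_mulVec, hBφ, smul_mulVec, one_mulVec, sub_self]
      rw [← Matrix.det_transpose, Matrix.transpose_sub, Matrix.transpose_smul,
        Matrix.transpose_one]
      exact hdetT
    obtain ⟨u, hune, huz⟩ := (Matrix.exists_mulVec_eq_zero_iff).2 hdet
    have hBu : B *ᵥ u = lam • u := by
      have := huz
      rw [sub_mulVec, smul_mulVec, one_mulVec, sub_eq_zero] at this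
      exact this
    -- the rank-one matrix u φᵀ
    set B' : Matrix (Fin m) (Fin m) ℂ := Matrix.of (fun i j => u i * φ j) with hB'def
    have hB'mul : ∀ x : Fin m → ℂ, B' *ᵥ x = (φ ⬝ᵥ x) • u := by
      intro x
      ext i
      simp [hB'def, mulVec, dotProduct, Finset.mul_sum, mul_assoc, mul_comm,
        mul_left_comm]
    have hcomm : B' * B = B * B' := by
      ext i j
      have h1 : (B' * B) i j = u i * ((Bᵀ *ᵥ φ) j) := by
        simp [hB'def, Matrix.mul_apply, mulVec, dotProduct, Finset.mul_sum,
          mul_assoc, transpose_apply, mul_comm, mul_left_comm]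
      have h2 : (B * B') i j = ((B *ᵥ u) i) * φ j := by
        simp [hB'def, Matrix.mul_apply, mulVec, dotProduct, Finset.sum_mul,
          mul_assoc]
      rw [h1, h2, hBφ, hBu]
      simp [mul_assoc, mul_left_comm, mul_comm]
    have hv0 : B' *ᵥ v = 0 := by
      rw [hB'mul, hφann v hvW, zero_smul]
    have hB'ne : B' ≠ 0 := by
      obtain ⟨i, hi⟩ := Function.ne_iff.1 hune
      obtain ⟨j, hj⟩ := Function.ne_iff.1 hφne
      intro hz
      have : B' i j = 0 := by rw [hz]; rfl
      rw [hB'def] at this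
      exact (mul_ne_zero hi hj) this
    exact hB'ne (h B' hcomm hv0)
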